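/- Let X and Y be real Banach spaces and A : X → Y a bounded linear operator. If A is (β)-able — that is, there exist C ≥ 1 and a norm |·| on X with C⁻¹‖x‖ ≤ |x| ≤ C‖x‖ for all x ∈ X such that A : (X, |·|) → Y has property (β) — then A is weakly compact. -/

import Mathlib

open Filter Topology Pointwise NormedSpace

noncomputable section

variable {X Y : Type*} [NormedAddCommGroup X] [NormedSpace ℝ X] [CompleteSpace X]
  [NormedAddCommGroup Y] [NormedSpace ℝ Y] [CompleteSpace Y]

/-- The adjoint `A* : Y* → X*` of a bounded linear operator, `(A* g)(x) = g (A x)`. -/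
def opAdjoint (A : X →L[ℝ] Y) : StrongDual ℝ Y →L[ℝ] StrongDual ℝ X :=
  (ContinuousLinearMap.compSL X Y ℝ (RingHom.id ℝ) (RingHom.id ℝ)).flip A

/-- An operator is weakly compact if the image of the closed unit ball is
relatively compact in the weak topology of the codomain. -/
def IsWeaklyCompactOp (A : X →L[ℝ] Y) : Prop :=
  IsCompact (closure (toWeakSpace ℝ Y '' (A '' Metric.closedBall 0 1)))

/-- `r` is a norm on `E` that is `C`-equivalent to the original norm:
`C⁻¹‖u‖ ≤ r u ≤ C‖u‖`. -/
def IsEquivNorm {E : Type*} [NormedAddCommGroup E] [NormedSpace ℝ E]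
    (C : ℝ) (r : E → ℝ) : Prop :=
  (∀ u v : E, r (u + v) ≤ r u + r v) ∧ (∀ (a : ℝ) (u : E), r (a • u) = |a| * r u) ∧
    ∀ u : E, C⁻¹ * ‖u‖ ≤ r u ∧ r u ≤ C * ‖u‖

/-- `A : (X, nr) → Y` has property (β) of Rolewicz. -/
def HasPropertyBeta (A : X →L[ℝ] Y) (nr : X → ℝ) : Prop :=
  ∀ ε : ℝ, 0 < ε → ∃ β : ℝ, 0 < β ∧ ∀ x : X, nr x ≤ 1 → ∀ xs : ℕ → X,
    (∀ n, nr (xs n) ≤ 1) → (∀ m n, m ≠ n → ε ≤ ‖A (xs m) - A (xs n)‖) →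
    ∃ n, nr (x + xs n) ≤ 2 * (1 - β)

/-- `A` is (β)-able: some equivalent norm on `X` makes `A` have property (β). -/
def BetaAble (A : X →L[ℝ] Y) : Prop :=
  ∃ C : ℝ, 1 ≤ C ∧ ∃ nr : X → ℝ, IsEquivNorm C nr ∧ HasPropertyBeta A nr

set_option linter.unusedSectionVars false

namespace Statement8Aux


/-- Helly-type lemma: a functional in the bidual far from the canonical image of `Y`
can be approximately represented, on finitely many vectors of `Y`, by a functional in
the ball of `Y*` vanishing on those vectors. -/
lemma helly (z : StrongDual ℝ (StrongDual ℝ Y)) {d δ : ℝ}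
    (hd : ∀ y : Y, d ≤ ‖z - inclusionInDoubleDual ℝ Y y‖) (hδ : 0 < δ) (hδd : δ < d)
    (L : List Y) :
    ∃ f : StrongDual ℝ Y, ‖f‖ ≤ 1 ∧ (∀ y ∈ L, f y = 0) ∧ d - δ ≤ z f := by
  classical
  set J := inclusionInDoubleDual ℝ Y with hJ
  set Lf : Fin L.length → (StrongDual ℝ Y →ₗ[ℝ] ℝ) := fun i => (J (L.get i)).toLinearMap with hLf
  set V : Submodule ℝ (StrongDual ℝ Y) := ⨅ i, LinearMap.ker (Lf i) with hV
  set φ : V →L[ℝ] ℝ := z.comp V.subtypeL with hφ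
  obtain ⟨G, hGext, hGnorm⟩ := exists_extension_norm_eq V φ
  have hker : ⨅ i, LinearMap.ker (Lf i) ≤ LinearMap.ker (z - G).toLinearMap := by
    intro v hv
    have hvV : v ∈ V := hv
    have h2 := hGext ⟨v, hvV⟩
    have : G v = z v := by
      rw [h2]; rfl
    simp [LinearMap.mem_ker, this]
  have hspan := mem_span_of_iInf_ker_le_ker (L := Lf) (K := (z - G).toLinearMap) hker
  obtain ⟨c, hc⟩ := (Submodule.mem_span_range_iff_exists_fun ℝ).1 hspan
  set e : Y := ∑ i, c i • L.get i with he
  have hze : z - G = J e := by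
    apply ContinuousLinearMap.coe_injective
    rw [← hc]
    have : J e = ∑ i, c i • J (L.get i) := by
      rw [he, map_sum]
      simp
    rw [this]
    ext f
    simp [Lf]
  have hGe : d ≤ ‖G‖ := by
    have := hd e
    rwa [← hze, sub_sub_cancel z G] at this
  have hφnorm := hGe
  rw [hGnorm] at hφnorm
  -- find an almost-norming element
  have hexists : ∃ v : V, ‖v‖ ≤ 1 ∧ d - δ ≤ φ v := by
    by_contra hcon
    push_neg at hcon
    have hbound := ContinuousLinearMap.opNorm_le_bound (𝕜 := ℝ) (E := V) φ (M := d - δ) (by linarith) fun v => by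
      rcases eq_or_ne v 0 with rfl | hv0
      · simp
      · have hnv : (0:ℝ) < ‖v‖ := (norm_pos_iff (a := v)).2 hv0
        set w : V := ‖v‖⁻¹ • v with hw
        have hwn : ‖w‖ ≤ 1 := by
          have hcoe : ‖w‖ = ‖v‖⁻¹ * ‖v‖ := by
            have : ((w : StrongDual ℝ Y)) = ‖v‖⁻¹ • (v : StrongDual ℝ Y) := rfl
            calc ‖w‖ = ‖(w : StrongDual ℝ Y)‖ := rfl
            _ = ‖(‖v‖⁻¹ : ℝ)‖ * ‖(v : StrongDual ℝ Y)‖ := by rw [this, norm_smul]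
            _ = ‖v‖⁻¹ * ‖v‖ := by rw [norm_inv, norm_norm]; rfl
          rw [hcoe, inv_mul_cancel₀ hnv.ne']
        have h1 : φ w < d - δ := hcon w hwn
        have h2 : φ (-w) < d - δ := hcon (-w) (by rwa [norm_neg w])
        have habs : |φ w| ≤ d - δ := by
          rw [abs_le]
          constructor
          · have : -(φ w) < d - δ := by rw [← map_neg]; exact h2
            linarith
          · linarith
        have hvw : φ v = ‖v‖ * φ w := by
          rw [hw, map_smul, smul_eq_mul, ← mul_assoc, mul_inv_cancel₀ hnv.ne', one_mul]
        rw [Real.norm_eq_abs, hvw, abs_mul, abs_of_pos hnv, mul_comm]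
        exact mul_le_mul_of_nonneg_right habs hnv.le
    linarith
  obtain ⟨v, hv1, hv2⟩ := hexists
  refine ⟨(v : StrongDual ℝ Y), hv1, ?_, hv2⟩
  intro y hy
  obtain ⟨i, rfl⟩ := List.mem_iff_get.1 hy
  have hvV : ∀ j, (v : StrongDual ℝ Y) ∈ LinearMap.ker (Lf j) := fun j =>
    (Submodule.mem_iInf _).1 v.2 j
  exact hvV i



/-- The canonical map into the bidual with weak-star topology. -/
def JW (Y : Type*) [NormedAddCommGroup Y] [NormedSpace ℝ Y] :
    Y → WeakDual ℝ (StrongDual ℝ Y) :=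
  fun y => StrongDual.toWeakDual (inclusionInDoubleDual ℝ Y y)

lemma JW_apply (y : Y) (f : StrongDual ℝ Y) : JW Y y f = f y := rfl

lemma JW_injective : Function.Injective (JW Y) := by
  intro y₁ y₂ h
  have := (inclusionInDoubleDualLi ℝ (E := Y)).injective
  apply this
  exact congrArg WeakDual.toStrongDual h

lemma inducing_JW : Topology.IsInducing (fun y : WeakSpace ℝ Y => JW Y ((toWeakSpace ℝ Y).symm y)) := by
  constructor
  show WeakBilin.instTopologicalSpace ((topDualPairing ℝ Y).flip) = _
  show TopologicalSpace.induced _ _ = _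
  show _ = TopologicalSpace.induced _ (WeakBilin.instTopologicalSpace (topDualPairing ℝ (StrongDual ℝ Y)))
  show _ = TopologicalSpace.induced _ (TopologicalSpace.induced
    (fun (g : WeakDual ℝ (StrongDual ℝ Y)) (f : StrongDual ℝ Y) => topDualPairing ℝ (StrongDual ℝ Y) g f)
    Pi.topologicalSpace)
  exact (induced_compose (f := fun y : WeakSpace ℝ Y => JW Y ((toWeakSpace ℝ Y).symm y))
    (g := fun (g : WeakDual ℝ (StrongDual ℝ Y)) (f : StrongDual ℝ Y) => topDualPairing ℝ (StrongDual ℝ Y) g f)).symm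

lemma weaklyCompactOp_of_subset_range (A : X →L[ℝ] Y)
    (hsub : closure (JW Y '' (A '' Metric.closedBall 0 1)) ⊆ Set.range (JW Y)) :
    IsWeaklyCompactOp A := by
  classical
  set K : Set Y := A '' Metric.closedBall 0 1 with hK
  set S := closure (JW Y '' K) with hS
  -- S is compact
  have hball : JW Y '' K ⊆ WeakDual.toStrongDual ⁻¹' Metric.closedBall 0 ‖A‖ := by
    rintro - ⟨y, ⟨x, hx, rfl⟩, rfl⟩
    simp only [Set.mem_preimage, Metric.mem_closedBall, dist_zero_right]
    have h1 : ‖WeakDual.toStrongDual (JW Y (A x))‖ = ‖A x‖ :=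
      (inclusionInDoubleDualLi ℝ (E := Y)).norm_map (A x)
    refine (dist_zero_right (WeakDual.toStrongDual (JW Y (A x)))).le.trans ?_
    rw [h1]
    calc ‖A x‖ ≤ ‖A‖ * ‖x‖ := A.le_opNorm x
    _ ≤ ‖A‖ * 1 := by
        have := Metric.mem_closedBall.1 hx
        rw [dist_zero_right] at this
        exact mul_le_mul_of_nonneg_left this (norm_nonneg _)
    _ = ‖A‖ := mul_one _
  have hSball : S ⊆ WeakDual.toStrongDual ⁻¹' Metric.closedBall 0 ‖A‖ :=
    closure_minimal hball (WeakDual.isClosed_closedBall _ _)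
  have hScompact : IsCompact S :=
    (WeakDual.isCompact_closedBall (𝕜 := ℝ) (E := StrongDual ℝ Y) 0 ‖A‖).of_isClosed_subset
      isClosed_closure hSball
  -- the map from the weak space is an embedding
  set F : WeakSpace ℝ Y → WeakDual ℝ (StrongDual ℝ Y) :=
    fun y => JW Y ((toWeakSpace ℝ Y).symm y) with hF
  have hemb : Topology.IsEmbedding F :=
    ⟨inducing_JW, fun a b hab => by
      have := JW_injective hab
      exact (toWeakSpace ℝ Y).symm.injective this⟩
  set P : Set (WeakSpace ℝ Y) := F ⁻¹' S with hP
  have hPclosed : IsClosed P := IsClosed.preimage hemb.continuous isClosed_closure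
  have hPcompact : IsCompact P := by
    rw [hemb.isCompact_iff]
    have : F '' P = S := by
      rw [hP, Set.image_preimage_eq_inter_range]
      apply Set.inter_eq_self_of_subset_left
      intro s hs
      obtain ⟨y, hy⟩ := hsub hs
      exact ⟨toWeakSpace ℝ Y y, by simp [hF, hy]⟩
    rwa [this]
  have hKP : toWeakSpace ℝ Y '' K ⊆ P := by
    rintro - ⟨y, hy, rfl⟩
    show F (toWeakSpace ℝ Y y) ∈ S
    have : F (toWeakSpace ℝ Y y) = JW Y y := by simp [hF]
    rw [this]
    exact subset_closure (Set.mem_image_of_mem _ hy)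
  exact hPcompact.of_isClosed_subset isClosed_closure (closure_minimal hKP hPclosed)


lemma exists_array (A : X →L[ℝ] Y) (hnc : ¬ IsWeaklyCompactOp A) :
    ∃ (a : ℝ) (x : ℕ → X) (f : ℕ → StrongDual ℝ Y), 0 < a ∧ (∀ n, ‖x n‖ ≤ 1) ∧
      (∀ n, ‖f n‖ ≤ 1) ∧ (∀ m n, m < n → f n (A (x m)) = 0) ∧
      (∀ n m, n ≤ m → a ≤ f n (A (x m))) := by
  classical
  by_cases hsub : closure (JW Y '' (A '' Metric.closedBall 0 1)) ⊆ Set.range (JW Y)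
  · exact absurd (weaklyCompactOp_of_subset_range A hsub) hnc
  rw [Set.not_subset] at hsub
  obtain ⟨zb, hzS, hzR⟩ := hsub
  set z : StrongDual ℝ (StrongDual ℝ Y) := WeakDual.toStrongDual zb with hz
  have hcl : IsClosed (Set.range fun y : Y => inclusionInDoubleDual ℝ Y y) := by
    have hiso := (inclusionInDoubleDualLi ℝ (E := Y)).isometry
    exact hiso.isUniformInducing.isComplete_range.isClosed
  have hznotmem : z ∉ Set.range fun y : Y => inclusionInDoubleDual ℝ Y y := by
    rintro ⟨y, hy⟩
    refine hzR ⟨y, ?_⟩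
    show StrongDual.toWeakDual (inclusionInDoubleDual ℝ Y y) = zb
    have hy' : inclusionInDoubleDual ℝ Y y = z := hy
    rw [hy', hz]
    exact LinearEquiv.apply_symm_apply _ zb
  set d : ℝ := Metric.infDist z (Set.range fun y : Y => inclusionInDoubleDual ℝ Y y) with hdd
  have hd0 : 0 < d := by
    rw [hdd]
    exact (hcl.notMem_iff_infDist_pos ⟨_, Set.mem_range_self 0⟩).1 hznotmem
  have hd : ∀ y : Y, d ≤ ‖z - inclusionInDoubleDual ℝ Y y‖ := by
    intro y
    have := Metric.infDist_le_dist_of_mem (x := z) (Set.mem_range_self (f := fun y : Y =>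
      inclusionInDoubleDual ℝ Y y) y)
    exact this.trans_eq (dist_eq_norm z _)
  -- approximation from closure membership
  have approx : ∀ Lf : List (StrongDual ℝ Y), ∀ δ : ℝ, 0 < δ →
      ∃ x : X, ‖x‖ ≤ 1 ∧ ∀ g ∈ Lf, dist (g (A x)) (z g) ≤ δ := by
    intro Lf δ hδ
    have hopen : IsOpen {g : WeakDual ℝ (StrongDual ℝ Y) | ∀ φ ∈ Lf, dist (g φ) (z φ) < δ} := by
      induction Lf with
      | nil => simpa using isOpen_univ
      | cons a t ih =>
        have h1 : {g : WeakDual ℝ (StrongDual ℝ Y) | ∀ φ ∈ a :: t, dist (g φ) (z φ) < δ}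
            = ((fun g : WeakDual ℝ (StrongDual ℝ Y) => g a) ⁻¹' Metric.ball (z a) δ)
              ∩ {g : WeakDual ℝ (StrongDual ℝ Y) | ∀ φ ∈ t, dist (g φ) (z φ) < δ} := by
          ext g
          simp only [Set.mem_setOf_eq, List.mem_cons, Set.mem_inter_iff, Set.mem_preimage,
            Metric.mem_ball, or_imp, forall_and, forall_eq]
        rw [h1]
        refine IsOpen.inter ?_ ih
        have hcont : Continuous (fun g : WeakDual ℝ (StrongDual ℝ Y) => g a) :=
          WeakBilin.eval_continuous (topDualPairing ℝ (StrongDual ℝ Y)) a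
        exact hcont.isOpen_preimage _ Metric.isOpen_ball
    have hzbO : zb ∈ {g : WeakDual ℝ (StrongDual ℝ Y) | ∀ φ ∈ Lf, dist (g φ) (z φ) < δ} := by
      intro φ _
      have : zb φ = z φ := rfl
      simp [this, hδ]
    obtain ⟨w, hwO, hwK⟩ := mem_closure_iff.1 hzS _ hopen hzbO
    obtain ⟨y, ⟨x, hx, rfl⟩, rfl⟩ := hwK
    refine ⟨x, ?_, ?_⟩
    · have := Metric.mem_closedBall.1 hx
      rwa [dist_zero_right] at this
    · intro g hg
      have : (JW Y (A x)) g = g (A x) := rfl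
      have h2 := hwO g hg
      rw [this] at h2
      exact h2.le
  -- inductive construction
  set Spec : List (X × StrongDual ℝ Y) → (X × StrongDual ℝ Y) → Prop := fun prev p =>
    ‖p.1‖ ≤ 1 ∧ ‖p.2‖ ≤ 1 ∧ (∀ q ∈ prev, p.2 (A q.1) = 0) ∧ d/2 ≤ z p.2 ∧
      dist (p.2 (A p.1)) (z p.2) ≤ d/4 ∧ ∀ q ∈ prev, dist (q.2 (A p.1)) (z q.2) ≤ d/4
    with hSpec
  have hstep : ∀ prev, ∃ p, Spec prev p := by
    intro prev
    obtain ⟨f, hf1, hf2, hf3⟩ := helly z hd (by linarith : (0:ℝ) < d/2)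
      (by linarith : d/2 < d) (prev.map fun q => A q.1)
    obtain ⟨x, hx1, hx2⟩ := approx (f :: prev.map Prod.snd) (d/4) (by linarith)
    refine ⟨(x, f), hx1, hf1, ?_, by linarith, ?_, ?_⟩
    · intro q hq
      exact hf2 (A q.1) (List.mem_map_of_mem hq)
    · exact hx2 f List.mem_cons_self
    · intro q hq
      exact hx2 q.2 (List.mem_cons_of_mem _ (List.mem_map_of_mem hq))
  choose step hstepspec using hstep
  set seqL : ℕ → List (X × StrongDual ℝ Y) :=
    fun n => Nat.rec [] (fun _ ih => ih ++ [step ih]) n with hseqL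
  set pair : ℕ → X × StrongDual ℝ Y := fun n => step (seqL n) with hpair
  have hseqLsucc : ∀ n, seqL (n+1) = seqL n ++ [pair n] := fun n => rfl
  have hmem : ∀ m n, m < n → pair m ∈ seqL n := by
    intro m n h
    induction n with
    | zero => omega
    | succ k ih =>
      rw [hseqLsucc k]
      rcases Nat.lt_succ_iff_lt_or_eq.1 h with h' | h'
      · exact List.mem_append_left _ (ih h')
      · subst h'
        exact List.mem_append_right _ (List.mem_singleton_self _)
  have hspec : ∀ n, Spec (seqL n) (pair n) := fun n => hstepspec (seqL n)
  refine ⟨d/4, fun n => (pair n).1, fun n => (pair n).2, by linarith,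
    fun n => (hspec n).1, fun n => (hspec n).2.1, ?_, ?_⟩
  · intro m n h
    exact (hspec n).2.2.1 (pair m) (hmem m n h)
  · intro n m h
    have hzf : d/2 ≤ z (pair n).2 := (hspec n).2.2.2.1
    have hdist : dist ((pair n).2 (A (pair m).1)) (z (pair n).2) ≤ d/4 := by
      rcases eq_or_lt_of_le h with h' | h'
      · subst h'
        exact (hspec n).2.2.2.2.1
      · exact (hspec m).2.2.2.2.2 (pair n) (hmem n m h')
    rw [Real.dist_eq, abs_le] at hdist
    linarith [hdist.1]



lemma part2 (A : X →L[ℝ] Y) {C : ℝ} {nr : X → ℝ} (hC : 1 ≤ C)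
    (heq : IsEquivNorm C nr) (hβ : HasPropertyBeta A nr)
    {a : ℝ} (ha : 0 < a) (u : ℕ → X) (f : ℕ → StrongDual ℝ Y)
    (hu : ∀ n, nr (u n) ≤ 1) (hf : ∀ n, ‖f n‖ ≤ 1)
    (hzero : ∀ m n, m < n → f n (A (u m)) = 0)
    (hpos : ∀ n m, n ≤ m → a ≤ f n (A (u m))) : False := by
  classical
  obtain ⟨hadd, hsmul, hbound⟩ := heq
  have hC0 : (0:ℝ) < C := lt_of_lt_of_le one_pos hC
  have hnrnonneg : ∀ v, 0 ≤ nr v := fun v =>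
    le_trans (by positivity) (hbound v).1
  have hnorm_le : ∀ v : X, ‖v‖ ≤ C * nr v := by
    intro v
    have h1 := (hbound v).1
    calc ‖v‖ = C * (C⁻¹ * ‖v‖) := by field_simp
    _ ≤ C * nr v := mul_le_mul_of_nonneg_left h1 hC0.le
  obtain ⟨β, hβ0, hβspec⟩ := hβ a ha
  set γ : ℝ := 1 - min β (1/2) with hγdef
  have hγlt : γ < 1 := by
    have : (0:ℝ) < min β (1/2) := lt_min hβ0 (by norm_num)
    rw [hγdef]; linarith
  have hγ0 : (0:ℝ) < γ := by
    have : min β (1/2) ≤ 1/2 := min_le_right _ _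
    rw [hγdef]; linarith
  have h2γ : 2 * (1 - β) ≤ 2 * γ := by
    have : min β (1/2) ≤ β := min_le_left _ _
    rw [hγdef]; linarith
  set Block : ℕ → ℕ → X → Prop :=
    fun N M v => v ∈ convexHull ℝ (u '' Set.Icc N M) with hBlock
  have hlin : ∀ n, IsLinearMap ℝ (fun w : X => f n (A w)) := fun n =>
    ⟨fun x y => by simp, fun c x => by simp⟩
  have blow : ∀ N M v, Block N M v → a ≤ f N (A v) := by
    intro N M v hv
    have hsub : u '' Set.Icc N M ⊆ {w : X | a ≤ f N (A w)} := by
      rintro - ⟨i, hi, rfl⟩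
      exact hpos N i hi.1
    exact convexHull_min hsub (convex_halfSpace_ge (hlin N) a) hv
  have bzero : ∀ N M v n, Block N M v → M < n → f n (A v) = 0 := by
    intro N M v n hv hMn
    have hsub : u '' Set.Icc N M ⊆ {w : X | f n (A w) = 0} := by
      rintro - ⟨i, hi, rfl⟩
      exact hzero i n (lt_of_le_of_lt hi.2 hMn)
    exact convexHull_min hsub (convex_hyperplane (hlin n) 0) hv
  have fle : ∀ n (y : Y), f n y ≤ ‖y‖ := by
    intro n y
    calc f n y ≤ |f n y| := le_abs_self _
    _ ≤ ‖f n‖ * ‖y‖ := (f n).le_opNorm y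
    _ ≤ 1 * ‖y‖ := mul_le_mul_of_nonneg_right (hf n) (norm_nonneg _)
    _ = ‖y‖ := one_mul _
  have bAnorm : ∀ N M v, Block N M v → a ≤ ‖A v‖ := fun N M v hv =>
    le_trans (blow N M v hv) (fle N (A v))
  have sep : ∀ N₁ M₁ v N₂ M₂ w, Block N₁ M₁ v → Block N₂ M₂ w → M₁ < N₂ →
      a ≤ ‖A w - A v‖ := by
    intro N₁ M₁ v N₂ M₂ w hv hw hlt
    have h1 := blow N₂ M₂ w hw
    have h2 := bzero N₁ M₁ v N₂ hv hlt
    have h3 : a ≤ f N₂ (A w - A v) := by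
      rw [map_sub, h2, sub_zero]; exact h1
    exact le_trans h3 (fle N₂ _)
  have main : ∀ k : ℕ, ∃ (V : ℕ → X) (M : ℕ → ℕ), ∀ N, N ≤ M N ∧ Block N (M N) (V N) ∧
      nr (V N) ≤ γ ^ k := by
    intro k
    induction k with
    | zero =>
      refine ⟨u, id, fun N => ⟨le_rfl, ?_, by simpa using hu N⟩⟩
      exact subset_convexHull ℝ _ ⟨N, ⟨le_rfl, le_rfl⟩, rfl⟩
    | succ k ih =>
      obtain ⟨V, M, hVM⟩ := ih
      have hex : ∀ N, ∃ (v : X) (m : ℕ), N ≤ m ∧ Block N m v ∧ nr v ≤ γ ^ (k+1) := by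
        intro N
        set g : ℕ → ℕ := fun j => Nat.rec N (fun _ gj => M gj + 1) j with hg
        have hg0 : g 0 = N := rfl
        have hgsucc : ∀ j, g (j+1) = M (g j) + 1 := fun j => rfl
        have hgmono : StrictMono g := strictMono_nat_of_lt_succ (fun j => by
          rw [hgsucc]
          exact lt_of_le_of_lt (hVM (g j)).1 (Nat.lt_succ_self _))
        set w : ℕ → X := fun j => V (g j) with hw
        have hγk0 : (0:ℝ) < γ ^ k := pow_pos hγ0 k
        have hγk1 : γ ^ k ≤ 1 := pow_le_one₀ hγ0.le hγlt.le
        have hinv1 : (1:ℝ) ≤ (γ ^ k)⁻¹ := (one_le_inv₀ hγk0).2 hγk1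
        set x₀ : X := (γ ^ k)⁻¹ • w 0 with hx₀def
        set xs : ℕ → X := fun j => (γ ^ k)⁻¹ • w (j+1) with hxs
        have hnrscale : ∀ v : X, nr ((γ ^ k)⁻¹ • v) = (γ ^ k)⁻¹ * nr v := by
          intro v
          rw [hsmul]
          congr 1
          exact abs_of_pos (inv_pos.2 hγk0)
        have hscaled : ∀ v : X, nr v ≤ γ ^ k → nr ((γ ^ k)⁻¹ • v) ≤ 1 := by
          intro v hv
          rw [hnrscale]
          calc (γ ^ k)⁻¹ * nr v ≤ (γ ^ k)⁻¹ * γ ^ k :=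
            mul_le_mul_of_nonneg_left hv (by positivity)
          _ = 1 := inv_mul_cancel₀ hγk0.ne'
        have hx₀1 : nr x₀ ≤ 1 := hscaled _ (hVM (g 0)).2.2
        have hxs1 : ∀ j, nr (xs j) ≤ 1 := fun j => hscaled _ (hVM (g (j+1))).2.2
        have hAxs : ∀ j, A (xs j) = (γ ^ k)⁻¹ • A (w (j+1)) := fun j => by
          rw [hxs]; simp
        have hkey : ∀ p q : ℕ, p < q → a ≤ ‖A (xs q) - A (xs p)‖ := by
          intro p q hpq
          have hMg : M (g (p+1)) < g (q+1) := by
            have h1 : g (p+2) ≤ g (q+1) := hgmono.monotone (show p+2 ≤ q+1 by omega)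
            have h2 : g (p+2) = M (g (p+1)) + 1 := hgsucc (p+1)
            omega
          have hsep' : a ≤ ‖A (w (q+1)) - A (w (p+1))‖ :=
            sep (g (p+1)) (M (g (p+1))) (w (p+1)) (g (q+1)) (M (g (q+1))) (w (q+1))
              (hVM (g (p+1))).2.1 (hVM (g (q+1))).2.1 hMg
          rw [hAxs, hAxs, ← smul_sub, norm_smul]
          have habs : ‖(γ ^ k)⁻¹‖ = (γ ^ k)⁻¹ := Real.norm_of_nonneg (by positivity)
          rw [habs]
          calc a = 1 * a := (one_mul a).symm
          _ ≤ (γ ^ k)⁻¹ * ‖A (w (q+1)) - A (w (p+1))‖ :=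
            mul_le_mul hinv1 hsep' ha.le (by positivity)
        have hsepfull : ∀ m n : ℕ, m ≠ n → a ≤ ‖A (xs m) - A (xs n)‖ := by
          intro m n hmn
          rcases lt_or_gt_of_ne hmn with h | h
          · rw [norm_sub_rev]; exact hkey m n h
          · exact hkey n m h
        obtain ⟨j, hj⟩ := hβspec x₀ hx₀1 xs hxs1 hsepfull
        refine ⟨(1/2 : ℝ) • w 0 + (1/2 : ℝ) • w (j+1), M (g (j+1)), ?_, ?_, ?_⟩
        · have e1 : N = g 0 := hg0.symm
          have e2 : g 0 ≤ g (j+1) := hgmono.monotone (Nat.zero_le (j+1))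
          have e3 : g (j+1) ≤ M (g (j+1)) := (hVM (g (j+1))).1
          omega
        · have hsub : ∀ i : ℕ, Set.Icc (g i) (M (g i)) ⊆ Set.Icc N (M (g (j+1))) →
              Block (g i) (M (g i)) (w i) → w i ∈ convexHull ℝ (u '' Set.Icc N (M (g (j+1)))) := by
            intro i hIcc hB
            exact convexHull_mono (Set.image_mono hIcc) hB
          have hm0 : w 0 ∈ convexHull ℝ (u '' Set.Icc N (M (g (j+1)))) := by
            apply hsub 0 ?_ (hVM (g 0)).2.1
            apply Set.Icc_subset_Icc
            · exact le_of_eq hg0.symm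
            · have h1 : g 1 = M (g 0) + 1 := hgsucc 0
              have h2 : g 1 ≤ g (j+1) := hgmono.monotone (show 1 ≤ j+1 by omega)
              have h3 : g (j+1) ≤ M (g (j+1)) := (hVM (g (j+1))).1
              omega
          have hm1 : w (j+1) ∈ convexHull ℝ (u '' Set.Icc N (M (g (j+1)))) := by
            apply hsub (j+1) ?_ (hVM (g (j+1))).2.1
            apply Set.Icc_subset_Icc
            · have e1 : N = g 0 := hg0.symm
              have e2 : g 0 ≤ g (j+1) := hgmono.monotone (Nat.zero_le (j+1))
              omega
            · exact le_rfl
          exact (convex_convexHull ℝ _) hm0 hm1 (by norm_num) (by norm_num) (by norm_num)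
        · have hcomb : w 0 + w (j+1) = (γ ^ k) • (x₀ + xs j) := by
            rw [hx₀def, hxs]
            rw [smul_add, smul_inv_smul₀ hγk0.ne', smul_inv_smul₀ hγk0.ne']
          have : (1/2 : ℝ) • w 0 + (1/2 : ℝ) • w (j+1) = (1/2 : ℝ) • (w 0 + w (j+1)) := by
            rw [smul_add]
          rw [this, hcomb, hsmul, hsmul]
          have habs1 : |(1/2 : ℝ)| = 1/2 := by norm_num
          have habs2 : |γ ^ k| = γ ^ k := abs_of_pos hγk0
          rw [habs1, habs2]
          have hle : nr (x₀ + xs j) ≤ 2 * γ := le_trans hj h2γ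
          have hmul : γ ^ k * nr (x₀ + xs j) ≤ γ ^ k * (2 * γ) :=
            mul_le_mul_of_nonneg_left hle hγk0.le
          have hps : γ ^ (k+1) = γ ^ k * γ := pow_succ γ k
          set t1 : ℝ := γ ^ k * nr (x₀ + xs j) with ht1
          set t2 : ℝ := γ ^ k * γ with ht2
          have h2 : γ ^ k * (2 * γ) = 2 * t2 := by rw [ht2]; ring
          rw [h2] at hmul
          rw [hps]
          linarith
      choose V' M' h1 h2 h3 using hex
      exact ⟨V', M', fun N => ⟨h1 N, h2 N, h3 N⟩⟩
  have hden : (0:ℝ) < ‖A‖ * C + 1 := by nlinarith [norm_nonneg A]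
  obtain ⟨k, hk⟩ := exists_pow_lt_of_lt_one (div_pos ha hden) hγlt
  obtain ⟨V, M, hVM⟩ := main k
  have h1 : a ≤ ‖A (V 0)‖ := bAnorm 0 (M 0) (V 0) (hVM 0).2.1
  have h2 : ‖A (V 0)‖ ≤ ‖A‖ * ‖V 0‖ := A.le_opNorm _
  have h3 : ‖V 0‖ ≤ C * nr (V 0) := hnorm_le _
  have h4 : nr (V 0) ≤ γ ^ k := (hVM 0).2.2
  have h3' : ‖V 0‖ ≤ C * γ ^ k := le_trans h3 (mul_le_mul_of_nonneg_left h4 hC0.le)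
  have h2' : ‖A‖ * ‖V 0‖ ≤ ‖A‖ * (C * γ ^ k) := mul_le_mul_of_nonneg_left h3' (norm_nonneg _)
  have h5 : a ≤ ‖A‖ * C * γ ^ k := by
    have := le_trans h1 (le_trans h2 h2')
    calc a ≤ ‖A‖ * (C * γ ^ k) := this
    _ = ‖A‖ * C * γ ^ k := by ring
  have h6 : ‖A‖ * C * γ ^ k ≤ (‖A‖ * C + 1) * γ ^ k :=
    mul_le_mul_of_nonneg_right (by linarith) (pow_pos hγ0 k).le
  have h7 : (‖A‖ * C + 1) * γ ^ k < (‖A‖ * C + 1) * (a / (‖A‖ * C + 1)) :=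
    mul_lt_mul_of_pos_left hk (by positivity)
  have h8 : (‖A‖ * C + 1) * (a / (‖A‖ * C + 1)) = a := by
    field_simp
  linarith

end Statement8Aux

/-- Proposition 6.2 of the paper: a (β)-able operator is weakly
compact. -/
theorem statement8 (A : X →L[ℝ] Y) (h : BetaAble A) : IsWeaklyCompactOp A := by
  by_contra hnc
  obtain ⟨C, hC, nr, heq, hβ⟩ := h
  obtain ⟨a, x, f, ha, hx, hf, hzero, hpos⟩ := Statement8Aux.exists_array A hnc
  have hC0 : (0:ℝ) < C := lt_of_lt_of_le one_pos hC
  set u : ℕ → X := fun n => C⁻¹ • x n with hudef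
  have hnru : ∀ n, nr (u n) ≤ 1 := by
    intro n
    have h1 := (heq.2.2 (u n)).2
    have h2 : ‖u n‖ = C⁻¹ * ‖x n‖ := by
      rw [hudef]
      simp only [norm_smul, Real.norm_eq_abs, abs_of_pos (inv_pos.2 hC0)]
    calc nr (u n) ≤ C * ‖u n‖ := h1
    _ = C * (C⁻¹ * ‖x n‖) := by rw [h2]
    _ = ‖x n‖ := by field_simp
    _ ≤ 1 := hx n
  have hfu : ∀ n m, f n (A (u m)) = C⁻¹ * f n (A (x m)) := by
    intro n m
    rw [hudef]
    simp only [map_smul, smul_eq_mul]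
  refine Statement8Aux.part2 A hC heq hβ (a := C⁻¹ * a) (by positivity) u f hnru hf ?_ ?_
  · intro m n hmn
    rw [hfu, hzero m n hmn, mul_zero]
  · intro n m hnm
    rw [hfu]
    exact mul_le_mul_of_nonneg_left (hpos n m hnm) (inv_pos.2 hC0).le
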